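/- Let (T, ·) be a semigroup equipped with a map β : T → L⁺T satisfying: (i) head(β(t)) = t for all t ∈ T; (ii) Δ(β(t)) = map β (β(t)) for all t ∈ T (i.e. β is an L⁺-coalgebra structure, where Δ sends a nonempty list to its list of nonempty suffixes); and (iii) for all x, y ∈ T, if β(y) = [y, y₁, …, y_n] then β(x·y) = [x·y, x·y₁, …, x·y_n, y, y₁, …, y_n]. Then T is empty. -/
import Mathlib


/-!
STATEMENT 19: Let `(T, ·)` be a semigroup with a map `β : T → L⁺T` such that
(i) `head (β t) = t`, (ii) `Δ (β t) = map β (β t)` (i.e. `β` is an `L⁺`-coalgebra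
structure, `Δ` being the list-of-nonempty-suffixes comultiplication), and
(iii) if `β y = [y, y₁, …, y_n]` then `β (x·y) = [x·y, x·y₁, …, x·y_n, y, y₁, …, y_n]`
(the `θ`-entwining condition).  Then `T` is empty.

Nonempty lists over `X` are modelled as pairs `(x, l) : X × List X` (head and tail).
-/

namespace Stmt19

/-- Nonempty lists over `X`, modelled as head-tail pairs. -/
abbrev NEL (X : Type*) : Type _ := X × List X

/-- Functorial action of `L⁺`. -/
def mapNE {X Y : Type*} (f : X → Y) (p : NEL X) : NEL Y :=
  (f p.1, p.2.map f)

/-- The nonempty suffixes of a list, as nonempty lists. -/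
def suff {X : Type*} : List X → List (NEL X)
  | [] => []
  | y :: t => (y, t) :: suff t

/-- The comultiplication `Δ : L⁺X → L⁺L⁺X` (list of nonempty suffixes). -/
def delta {X : Type*} (p : NEL X) : NEL (NEL X) :=
  (p, suff p.2)

/-- A semigroup `T` with an `L⁺`-coalgebra structure `β` satisfying the
`θ`-entwining condition must be empty. -/
theorem entwined_semigroup_isEmpty
    (T : Type*) [Semigroup T] (β : T → NEL T)
    -- (i) `head (β t) = t`:
    (hhead : ∀ t : T, (β t).1 = t)
    -- (ii) `Δ (β t) = map β (β t)`:
    (hcoassoc : ∀ t : T, delta (β t) = mapNE β (β t))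
    -- (iii) the `θ`-entwining condition: if `β y = [y, y₁, …, y_n]` then
    -- `β (x·y) = [x·y, x·y₁, …, x·y_n, y, y₁, …, y_n]`:
    (hentw : ∀ x y : T,
      β (x * y) = (x * y, ((β y).2.map (fun z => x * z)) ++ (y :: (β y).2))) :
    IsEmpty T := by
  -- key: if (β t).2 = z :: rest then β z = (z, rest)
  have key : ∀ (t z : T) (rest : List T), (β t).2 = z :: rest → β z = (z, rest) := by
    intro t z rest h
    have h2 := congrArg Prod.snd (hcoassoc t)
    simp only [delta, mapNE] at h2
    rw [h] at h2
    simp only [suff, List.map_cons] at h2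
    exact (List.cons.injEq _ _ _ _).mp h2 |>.1.symm
  have noBig : ∀ (t z : T) (rest : List T), (β t).2 = z :: rest → False := by
    intro t z rest h
    have hz := key t z rest h
    -- β (t*z) via entwining:
    have e1 := hentw t z
    rw [hz] at e1
    -- β (t*t) tail:
    have e2 := congrArg Prod.snd (hentw t t)
    rw [h] at e2
    simp only [List.map_cons, List.cons_append] at e2
    have e3 := key (t * t) (t * z) _ e2
    have := congrArg (fun p => p.2.length) (e1.symm.trans e3)
    simp at this
  constructor
  intro t
  cases h : (β t).2 with
  | cons z rest => exact noBig t z rest h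
  | nil =>
    have e2 := congrArg Prod.snd (hentw t t)
    rw [h] at e2
    simp only [List.map_nil, List.nil_append] at e2
    exact noBig (t * t) t [] e2

end Stmt19
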